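/- Let (Σ, σ) be a topologically mixing subshift of finite type with Hölder potential φ and Gibbs measure μ with constant c > 1 (i.e., c⁻¹ ≤ μ[x]_n / exp(φⁿ(x) - nP(φ)) ≤ c for all x and n). Then there exists a constant C > 0 such that for all positive integers n, m and all j ≥ n, μ(U_n ∩ σ^{-j}(U_m)) ≤ C · μ(U_n) · μ(U_m), whenever U_n is a union of cylinders of length n and U_m is a union of cylinders of length m. -/

import Mathlib

open MeasureTheory

/-- The left shift on one-sided sequences. -/
def shiftSeq {α : Type*} : (ℕ → α) → ℕ → α := fun x n => x (n + 1)

/-- The cylinder of length `n` centred at `x`. -/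
def cyl {α : Type*} (x : ℕ → α) (n : ℕ) : Set (ℕ → α) := {y | ∀ i < n, y i = x i}

/-- The Birkhoff sum `φⁿ(x) = φ(x) + φ(σx) + ⋯ + φ(σ^{n-1}x)`. -/
def birk {α : Type*} (φ : (ℕ → α) → ℝ) (n : ℕ) (x : ℕ → α) : ℝ :=
  ∑ i ∈ Finset.range n, φ (shiftSeq^[i] x)

lemma shiftSeq_iter {α : Type*} (j : ℕ) (x : ℕ → α) (k : ℕ) :
    shiftSeq^[j] x k = x (k + j) := by
  induction j generalizing x with
  | zero => rfl
  | succ j ih =>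
    rw [Function.iterate_succ_apply, ih]
    rfl

lemma birk_add {α : Type*} (φ : (ℕ → α) → ℝ) (a b : ℕ) (x : ℕ → α) :
    birk φ (a + b) x = birk φ a x + birk φ b (shiftSeq^[a] x) := by
  unfold birk
  rw [Finset.sum_range_add]
  congr 1
  apply Finset.sum_congr rfl
  intro i _
  rw [← Function.iterate_add_apply, Nat.add_comm i a]

lemma measurableSet_cyl {l : ℕ} (x : ℕ → Fin l) (n : ℕ) : MeasurableSet (cyl x n) := by
  have h : cyl x n = ⋂ i ∈ Finset.range n, (fun y : ℕ → Fin l => y i) ⁻¹' {x i} := by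
    ext y; simp [cyl]
  rw [h]
  exact MeasurableSet.biInter (Finset.range n).countable_toSet fun i _ =>
    measurable_pi_apply i (measurableSet_singleton _)

lemma key_cyl_bound {l : ℕ} (A : Fin l → Fin l → Bool) (φ : (ℕ → Fin l) → ℝ)
    (μ : Measure (ℕ → Fin l)) [IsProbabilityMeasure μ]
    (hsupp : μ {x | ∀ n, A (x n) (x (n + 1)) = true} = 1)
    (P c : ℝ) (hc : 1 < c)
    (hGibbs : ∀ x : ℕ → Fin l, (∀ n, A (x n) (x (n + 1)) = true) → ∀ n : ℕ, 1 ≤ n →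
      ENNReal.ofReal (c⁻¹ * Real.exp (birk φ n x - n * P)) ≤ μ (cyl x n) ∧
      μ (cyl x n) ≤ ENNReal.ofReal (c * Real.exp (birk φ n x - n * P)))
    (n m j : ℕ) (hn : 1 ≤ n) (hm : 1 ≤ m) (hj : n ≤ j)
    (U : Set (ℕ → Fin l)) (hU : ∀ x ∈ U, cyl x n ⊆ U) (y : ℕ → Fin l) :
    μ (U ∩ shiftSeq^[j] ⁻¹' cyl y m) ≤ ENNReal.ofReal (c ^ 3) * μ U * μ (cyl y m) := by
  classical
  set Sig : Set (ℕ → Fin l) := {x | ∀ k, A (x k) (x (k + 1)) = true} with hSig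
  set F : Set (ℕ → Fin l) := U ∩ shiftSeq^[j] ⁻¹' cyl y m with hF
  set Q : (Fin j → Fin l) → Prop := fun v => ∃ x, (x ∈ F ∩ Sig) ∧ ∀ i : Fin j, x i = v i
    with hQ
  set pick : (Fin j → Fin l) → (ℕ → Fin l) := fun v => if h : Q v then h.choose else y
    with hpick
  have hpick_spec : ∀ v, Q v → (pick v ∈ F ∩ Sig) ∧ ∀ i : Fin j, pick v i = v i := by
    intro v hv
    simp only [hpick, dif_pos hv]
    exact hv.choose_spec
  set S : Finset (Fin j → Fin l) := Finset.univ.filter Q with hS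
  have hmemS : ∀ v, v ∈ S ↔ Q v := by
    intro v; simp [hS]
  -- the cover
  have hcover : F ⊆ Sigᶜ ∪ ⋃ v ∈ S, cyl (pick v) (j + m) := by
    intro x hx
    by_cases hxs : x ∈ Sig
    · right
      have hv : Q (fun i : Fin j => x i) := ⟨x, ⟨hx, hxs⟩, fun i => rfl⟩
      have hps := hpick_spec _ hv
      refine Set.mem_iUnion₂.2 ⟨fun i : Fin j => x i, (hmemS _).2 hv, ?_⟩
      intro i hi
      rcases Nat.lt_or_ge i j with h | h
      · exact (hps.2 ⟨i, h⟩).symm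
      · have ht : i - j < m := by omega
        have hij : (i - j) + j = i := by omega
        have h1 : x i = y (i - j) := by
          have h1' := hx.2 (i - j) ht
          rw [shiftSeq_iter, hij] at h1'
          exact h1'
        have h2 : pick (fun i : Fin j => x i) i = y (i - j) := by
          have h2' := hps.1.1.2 (i - j) ht
          rw [shiftSeq_iter, hij] at h2'
          exact h2'
        exact h1.trans h2.symm
    · left; exact hxs
  have hSigMeas : MeasurableSet Sig := by
    have h : Sig = ⋂ k, (fun x : ℕ → Fin l => A (x k) (x (k + 1))) ⁻¹' {true} := by
      ext x; simp [hSig]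
    rw [h]
    refine MeasurableSet.iInter fun k => ?_
    have hmf : Measurable fun x : ℕ → Fin l => A (x k) (x (k + 1)) := by
      have h1 : Measurable fun x : ℕ → Fin l => (x k, x (k + 1)) :=
        (measurable_pi_apply k).prodMk (measurable_pi_apply (k + 1))
      exact (measurable_of_countable fun p : Fin l × Fin l => A p.1 p.2).comp h1
    exact hmf (measurableSet_singleton true)
  have hSigc : μ Sigᶜ = 0 := by
    rw [measure_compl hSigMeas (measure_ne_top μ _), hsupp, measure_univ, tsub_self]
  have hc0 : (0 : ℝ) < c := by linarith
  -- per-v bound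
  have hperv : ∀ v ∈ S, μ (cyl (pick v) (j + m)) ≤
      ENNReal.ofReal (c ^ 3) * μ (cyl (pick v) j) * μ (cyl y m) := by
    intro v hvS
    have hv : Q v := (hmemS v).1 hvS
    obtain ⟨⟨hxF, hxSig⟩, hagree⟩ := hpick_spec v hv
    set x := pick v with hx
    have hadm : ∀ k, A (x k) (x (k + 1)) = true := hxSig
    have hadm' : ∀ k, A ((shiftSeq^[j] x) k) ((shiftSeq^[j] x) (k + 1)) = true := by
      intro k
      rw [shiftSeq_iter, shiftSeq_iter]
      have he : k + 1 + j = (k + j) + 1 := by omega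
      rw [he]
      exact hadm (k + j)
    have hcylm : cyl (shiftSeq^[j] x) m = cyl y m := by
      ext z
      constructor <;> intro hz i hi
      · rw [hz i hi]; exact hxF.2 i hi
      · rw [hz i hi]; exact (hxF.2 i hi).symm
    have h1 : ENNReal.ofReal (c⁻¹ * Real.exp (birk φ j x - j * P)) ≤ μ (cyl x j) :=
      (hGibbs x hadm j (by omega)).1
    have h2 : ENNReal.ofReal (c⁻¹ * Real.exp (birk φ m (shiftSeq^[j] x) - m * P))
        ≤ μ (cyl y m) := by
      rw [← hcylm]; exact (hGibbs _ hadm' m hm).1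
    have h3 := (hGibbs x hadm (j + m) (by omega)).2
    have hsplit : birk φ (j + m) x = birk φ j x + birk φ m (shiftSeq^[j] x) :=
      birk_add φ j m x
    have key_eq : c * Real.exp (birk φ (j + m) x - (↑(j + m) : ℝ) * P)
        = c ^ 3 * ((c⁻¹ * Real.exp (birk φ j x - j * P)) *
            (c⁻¹ * Real.exp (birk φ m (shiftSeq^[j] x) - m * P))) := by
      rw [hsplit]
      rw [show ((j + m : ℕ) : ℝ) = (j : ℝ) + (m : ℝ) by push_cast; ring]
      rw [show birk φ j x + birk φ m (shiftSeq^[j] x) - ((j : ℝ) + (m : ℝ)) * P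
          = (birk φ j x - j * P) + (birk φ m (shiftSeq^[j] x) - m * P) by ring]
      rw [Real.exp_add]
      field_simp
    calc μ (cyl x (j + m))
        ≤ ENNReal.ofReal (c * Real.exp (birk φ (j + m) x - (↑(j + m) : ℝ) * P)) := h3
      _ = ENNReal.ofReal (c ^ 3) *
          (ENNReal.ofReal (c⁻¹ * Real.exp (birk φ j x - j * P)) *
           ENNReal.ofReal (c⁻¹ * Real.exp (birk φ m (shiftSeq^[j] x) - m * P))) := by
          rw [key_eq, ENNReal.ofReal_mul (by positivity), ENNReal.ofReal_mul (by positivity)]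
      _ ≤ ENNReal.ofReal (c ^ 3) * (μ (cyl x j) * μ (cyl y m)) :=
          mul_le_mul_right (mul_le_mul' h1 h2) _
      _ = ENNReal.ofReal (c ^ 3) * μ (cyl x j) * μ (cyl y m) := by rw [mul_assoc]
  -- disjointness of the length-j cylinders
  have hdisj : (S : Set (Fin j → Fin l)).PairwiseDisjoint fun v => cyl (pick v) j := by
    intro v hv v' hv' hne
    have hQv : Q v := (hmemS v).1 hv
    have hQv' : Q v' := (hmemS v').1 hv'
    refine Set.disjoint_left.2 fun z hz hz' => hne ?_
    funext i
    calc v i = pick v i := ((hpick_spec v hQv).2 i).symm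
      _ = z i := (hz i i.isLt).symm
      _ = pick v' i := hz' i i.isLt
      _ = v' i := (hpick_spec v' hQv').2 i
  have hsum_le : ∑ v ∈ S, μ (cyl (pick v) j) ≤ μ U := by
    rw [← measure_biUnion_finset hdisj fun v _ => measurableSet_cyl _ _]
    apply measure_mono
    refine Set.iUnion₂_subset fun v hv => ?_
    have hQv : Q v := (hmemS v).1 hv
    have hxU : pick v ∈ U := (hpick_spec v hQv).1.1.1
    intro z hz
    exact hU _ hxU fun i hi => hz i (lt_of_lt_of_le hi hj)
  calc μ F ≤ μ (Sigᶜ ∪ ⋃ v ∈ S, cyl (pick v) (j + m)) := measure_mono hcover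
    _ ≤ μ Sigᶜ + μ (⋃ v ∈ S, cyl (pick v) (j + m)) := measure_union_le _ _
    _ = μ (⋃ v ∈ S, cyl (pick v) (j + m)) := by rw [hSigc, zero_add]
    _ ≤ ∑ v ∈ S, μ (cyl (pick v) (j + m)) := measure_biUnion_finset_le S _
    _ ≤ ∑ v ∈ S, ENNReal.ofReal (c ^ 3) * μ (cyl (pick v) j) * μ (cyl y m) :=
        Finset.sum_le_sum hperv
    _ = ENNReal.ofReal (c ^ 3) * (∑ v ∈ S, μ (cyl (pick v) j)) * μ (cyl y m) := by
        rw [← Finset.sum_mul, ← Finset.mul_sum]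
    _ ≤ ENNReal.ofReal (c ^ 3) * μ U * μ (cyl y m) :=
        mul_le_mul_left (mul_le_mul_right hsum_le _) _

lemma meas_partition {l : ℕ} (μ : Measure (ℕ → Fin l)) (m k : ℕ)
    (X : Set (ℕ → Fin l)) (hX : MeasurableSet X) :
    μ X = ∑ w : Fin m → Fin l, μ (X ∩ {x | ∀ i : Fin m, x (i + k) = w i}) := by
  classical
  have hmeasP : ∀ w : Fin m → Fin l,
      MeasurableSet {x : ℕ → Fin l | ∀ i : Fin m, x (i + k) = w i} := by
    intro w
    have h : {x : ℕ → Fin l | ∀ i : Fin m, x (i + k) = w i}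
        = ⋂ i : Fin m, (fun x : ℕ → Fin l => x (i + k)) ⁻¹' {w i} := by
      ext x; simp
    rw [h]
    exact MeasurableSet.iInter fun i => measurable_pi_apply _ (measurableSet_singleton _)
  have hcover : X = ⋃ w : Fin m → Fin l, X ∩ {x | ∀ i : Fin m, x (i + k) = w i} := by
    ext x
    simp only [Set.mem_iUnion, Set.mem_inter_iff, Set.mem_setOf_eq]
    constructor
    · intro hx; exact ⟨fun i => x (i + k), hx, fun i => rfl⟩
    · rintro ⟨w, hx, -⟩; exact hx
  have hdisj : Pairwise (Function.onFun Disjoint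
      fun w : Fin m → Fin l => X ∩ {x | ∀ i : Fin m, x (i + k) = w i}) := by
    intro w w' hne
    refine Set.disjoint_left.2 fun z hz hz' => hne ?_
    funext i
    rw [← hz.2 i, hz'.2 i]
  conv_lhs => rw [hcover]
  rw [measure_iUnion hdisj fun w => hX.inter (hmeasP w)]
  exact tsum_fintype _

theorem gibbs_correlation_bound {l : ℕ} (A : Fin l → Fin l → Bool)
    (hirr : ∃ d : ℕ, 1 ≤ d ∧ ∀ i j : Fin l, ∃ y : ℕ → Fin l,
      y 0 = i ∧ y d = j ∧ ∀ k < d, A (y k) (y (k + 1)) = true)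
    (θ : ℝ) (hθ : 0 < θ) (hθ1 : θ < 1)
    (φ : (ℕ → Fin l) → ℝ) (Kφ : ℝ)
    (hφ : ∀ x y : ℕ → Fin l, ∀ n : ℕ, (∀ i < n, x i = y i) → |φ x - φ y| ≤ Kφ * θ ^ n)
    (μ : Measure (ℕ → Fin l)) [IsProbabilityMeasure μ]
    (hsupp : μ {x | ∀ n, A (x n) (x (n + 1)) = true} = 1)
    (P : ℝ) (c : ℝ) (hc : 1 < c)
    (hGibbs : ∀ x : ℕ → Fin l, (∀ n, A (x n) (x (n + 1)) = true) → ∀ n : ℕ, 1 ≤ n →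
      ENNReal.ofReal (c⁻¹ * Real.exp (birk φ n x - n * P)) ≤ μ (cyl x n) ∧
      μ (cyl x n) ≤ ENNReal.ofReal (c * Real.exp (birk φ n x - n * P))) :
    ∃ C : ℝ, 0 < C ∧ ∀ n m j : ℕ, 1 ≤ n → 1 ≤ m → n ≤ j →
      ∀ U V : Set (ℕ → Fin l), MeasurableSet U → MeasurableSet V →
        (∀ x ∈ U, cyl x n ⊆ U) → (∀ x ∈ V, cyl x m ⊆ V) →
        μ (U ∩ shiftSeq^[j] ⁻¹' V) ≤ ENNReal.ofReal C * μ U * μ V := by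
  classical
  have hc0 : (0 : ℝ) < c := by linarith
  refine ⟨c ^ 3, by positivity, ?_⟩
  intro n m j hn hm hj U V hUm hVm hU hV
  have hσmeas : Measurable (shiftSeq^[j] : (ℕ → Fin l) → (ℕ → Fin l)) := by
    apply measurable_pi_iff.2
    intro i
    have h : (fun x : ℕ → Fin l => shiftSeq^[j] x i) = fun x => x (i + j) := by
      funext x; exact shiftSeq_iter j x i
    rw [h]; exact measurable_pi_apply _
  set X := U ∩ shiftSeq^[j] ⁻¹' V with hX
  have hXm : MeasurableSet X := hUm.inter (hσmeas hVm)
  rw [meas_partition μ m j X hXm, meas_partition μ m 0 V hVm, Finset.mul_sum]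
  apply Finset.sum_le_sum
  intro w _
  by_cases hne : (V ∩ {x : ℕ → Fin l | ∀ i : Fin m, x (i + 0) = w i}).Nonempty
  · obtain ⟨x₀, hx₀V, hx₀w⟩ := hne
    have hcyl : cyl x₀ m = {x : ℕ → Fin l | ∀ i : Fin m, x (↑i + 0) = w i} := by
      ext z
      simp only [cyl, Set.mem_setOf_eq]
      constructor
      · intro hz i
        exact (hz i i.isLt).trans (hx₀w i)
      · intro hz i hi
        exact (hz ⟨i, hi⟩).trans (hx₀w ⟨i, hi⟩).symm
    have hVQ : V ∩ {x : ℕ → Fin l | ∀ i : Fin m, x (↑i + 0) = w i} = cyl x₀ m := by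
      have hsub : cyl x₀ m ⊆ V := hV x₀ hx₀V
      rw [hcyl] at hsub
      rw [hcyl]
      exact Set.inter_eq_self_of_subset_right hsub
    have hXsub : X ∩ {x : ℕ → Fin l | ∀ i : Fin m, x (↑i + j) = w i}
        ⊆ U ∩ shiftSeq^[j] ⁻¹' cyl x₀ m := by
      rintro z ⟨⟨hzU, -⟩, hzw⟩
      refine ⟨hzU, ?_⟩
      intro i hi
      rw [shiftSeq_iter]
      exact (hzw ⟨i, hi⟩).trans (hx₀w ⟨i, hi⟩).symm
    calc μ (X ∩ {x : ℕ → Fin l | ∀ i : Fin m, x (↑i + j) = w i})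
        ≤ μ (U ∩ shiftSeq^[j] ⁻¹' cyl x₀ m) := measure_mono hXsub
      _ ≤ ENNReal.ofReal (c ^ 3) * μ U * μ (cyl x₀ m) :=
          key_cyl_bound A φ μ hsupp P c hc hGibbs n m j hn hm hj U hU x₀
      _ = ENNReal.ofReal (c ^ 3) * μ U *
          μ (V ∩ {x : ℕ → Fin l | ∀ i : Fin m, x (↑i + 0) = w i}) := by rw [hVQ]
  · have hempty : X ∩ {x : ℕ → Fin l | ∀ i : Fin m, x (↑i + j) = w i} = ∅ := by
      rw [Set.eq_empty_iff_forall_notMem]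
      rintro z ⟨⟨-, hzV⟩, hzw⟩
      refine hne ⟨shiftSeq^[j] z, hzV, fun i => ?_⟩
      rw [shiftSeq_iter]
      exact hzw i
    rw [hempty]
    simp
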